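/- Let A be an n×n real PSD matrix of rank exactly k, let U₁ have orthonormal columns spanning the range of A, and let τ = μ₀(U₁). Fix δ ∈ (0,1) and ε ∈ (0,1). If S samples ℓ ≥ 2τk·log(k/δ)/(1−ε)² columns of A uniformly at random without replacement, then with probability exceeding 1 − δ the Nyström extension recovers A exactly: A = C W† Cᵗ. -/

import Mathlib

open Matrix
open scoped Matrix.Norms.L2Operator

open scoped Classical in
/-- Moore–Penrose pseudoinverse, defined via the four Penrose conditions. -/
noncomputable def pinv {m n : Type*} [Fintype m] [Fintype n] (M : Matrix m n ℝ) :
    Matrix n m ℝ :=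
  if h : ∃ X : Matrix n m ℝ,
      M * X * M = M ∧ X * M * X = X ∧ (M * X)ᵀ = M * X ∧ (X * M)ᵀ = X * M
  then h.choose else 0

open scoped Classical in
/-- `eigvalsDesc A i` is the `(i+1)`-st largest eigenvalue of `A` (0-based index `i`);
junk value `0` if `A` is not Hermitian or `i` is out of range. -/
noncomputable def eigvalsDesc {n : ℕ} (A : Matrix (Fin n) (Fin n) ℝ) (i : ℕ) : ℝ :=
  if h : A.IsHermitian ∧ i < n then
    h.1.eigenvalues (Tuple.sort h.1.eigenvalues (Fin.rev ⟨i, h.2⟩))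
  else 0

/-- The coherence of an `n × k` matrix: `(n/k)` times the maximal squared row norm. -/
noncomputable def coherence {n k : ℕ} (U : Matrix (Fin n) (Fin k) ℝ) : ℝ :=
  ((n : ℝ) / k) * ⨆ i : Fin n, ∑ j : Fin k, (U i j) ^ 2

/-- The `n × ℓ` matrix consisting of the first `ℓ` columns of the permutation matrix of `σ`
(column `j` is the standard basis vector `e_{σ j}`). -/
def sampleMatrix {n ℓ : ℕ} (hl : ℓ ≤ n) (σ : Equiv.Perm (Fin n)) :
    Matrix (Fin n) (Fin ℓ) ℝ :=
  Matrix.of fun i j => if σ (Fin.castLE hl j) = i then (1 : ℝ) else 0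

lemma penrose_unique {m n : Type*} [Fintype m] [Fintype n] (M : Matrix m n ℝ)
    (X Y : Matrix n m ℝ)
    (hX : M * X * M = M ∧ X * M * X = X ∧ (M * X)ᵀ = M * X ∧ (X * M)ᵀ = X * M)
    (hY : M * Y * M = M ∧ Y * M * Y = Y ∧ (M * Y)ᵀ = M * Y ∧ (Y * M)ᵀ = Y * M) :
    X = Y := by
  obtain ⟨hX1, hX2, hX3, hX4⟩ := hX
  obtain ⟨hY1, hY2, hY3, hY4⟩ := hY
  have h1 : M * X = M * Y := by
    calc M * X = (M * Y) * (M * X) := by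
          conv_lhs => rw [← hY1]
          simp only [Matrix.mul_assoc]
    _ = ((M * X) * (M * Y))ᵀ := by
          rw [Matrix.transpose_mul, hY3, hX3]
    _ = M * Y := by
          rw [show M * X * (M * Y) = (M * X * M) * Y by simp only [Matrix.mul_assoc], hX1, hY3]
  have h2 : X * M = Y * M := by
    calc X * M = (X * M) * (Y * M) := by
          conv_lhs => rw [← hY1]
          simp only [Matrix.mul_assoc]
    _ = ((Y * M) * (X * M))ᵀ := by
          rw [Matrix.transpose_mul, hY4, hX4]
    _ = Y * M := by
          rw [show Y * M * (X * M) = Y * (M * X) * M by simp only [Matrix.mul_assoc], h1,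
            show Y * (M * Y) * M = (Y * M * Y) * M by simp only [Matrix.mul_assoc], hY2, hY4]
  calc X = X * M * X := hX2.symm
  _ = Y * M * X := by rw [h2]
  _ = Y * (M * X) := by rw [Matrix.mul_assoc]
  _ = Y * (M * Y) := by rw [h1]
  _ = Y := by rw [← Matrix.mul_assoc, hY2]

lemma pinv_eq {m n : Type*} [Fintype m] [Fintype n] (M : Matrix m n ℝ) (X : Matrix n m ℝ)
    (hX : M * X * M = M ∧ X * M * X = X ∧ (M * X)ᵀ = M * X ∧ (X * M)ᵀ = X * M) :
    pinv M = X := by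
  have h : ∃ X : Matrix n m ℝ,
      M * X * M = M ∧ X * M * X = X ∧ (M * X)ᵀ = M * X ∧ (X * M)ᵀ = X * M := ⟨X, hX⟩
  rw [pinv, dif_pos h]
  exact penrose_unique M h.choose X h.choose_spec hX

lemma dot_mulVec' {m n : Type*} [Fintype m] [Fintype n] (M : Matrix m n ℝ) (x : m → ℝ)
    (y : n → ℝ) : x ⬝ᵥ (M *ᵥ y) = (Mᵀ *ᵥ x) ⬝ᵥ y := by
  rw [Matrix.dotProduct_mulVec, ← Matrix.mulVec_transpose]

lemma transpose_sample_mul {n ℓ : ℕ} (hl : ℓ ≤ n) (σ : Equiv.Perm (Fin n))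
    {c : Type*} [Fintype c] (M : Matrix (Fin n) c ℝ) :
    (sampleMatrix hl σ)ᵀ * M = Matrix.of fun j r => M (σ (Fin.castLE hl j)) r := by
  ext j r
  simp only [Matrix.mul_apply, Matrix.transpose_apply, sampleMatrix, Matrix.of_apply]
  rw [Finset.sum_eq_single (σ (Fin.castLE hl j))]
  · simp
  · intro b _ hb; rw [if_neg fun h => hb h.symm, zero_mul]
  · simp

section Det
variable {n ℓ k : ℕ} (hln : ℓ ≤ n)
variable (A : Matrix (Fin n) (Fin n) ℝ) (U₁ : Matrix (Fin n) (Fin k) ℝ)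

theorem det_recovery (hAt : Aᵀ = A) (hU₁ : U₁ᵀ * U₁ = 1)
    (hspan : Submodule.span ℝ (Set.range U₁ᵀ) = LinearMap.range A.mulVecLin)
    (σ : Equiv.Perm (Fin n))
    (hgood : Submodule.span ℝ
      (Set.range fun j : Fin ℓ => U₁ (σ (Fin.castLE hln j))) = ⊤)
    (pinv : Matrix (Fin ℓ) (Fin ℓ) ℝ)
    (hpinv : ∀ X : Matrix (Fin ℓ) (Fin ℓ) ℝ,
      (((sampleMatrix hln σ)ᵀ * A * sampleMatrix hln σ) * X *
          ((sampleMatrix hln σ)ᵀ * A * sampleMatrix hln σ) =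
          ((sampleMatrix hln σ)ᵀ * A * sampleMatrix hln σ) ∧
        X * ((sampleMatrix hln σ)ᵀ * A * sampleMatrix hln σ) * X = X ∧
        (((sampleMatrix hln σ)ᵀ * A * sampleMatrix hln σ) * X)ᵀ =
          ((sampleMatrix hln σ)ᵀ * A * sampleMatrix hln σ) * X ∧
        (X * ((sampleMatrix hln σ)ᵀ * A * sampleMatrix hln σ))ᵀ =
          X * ((sampleMatrix hln σ)ᵀ * A * sampleMatrix hln σ)) → pinv = X) :
    A = (A * sampleMatrix hln σ) * pinv * (A * sampleMatrix hln σ)ᵀ := by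
  classical
  set S := sampleMatrix hln σ with hS
  have hfix : ∀ v ∈ Submodule.span ℝ (Set.range U₁ᵀ), U₁ *ᵥ (U₁ᵀ *ᵥ v) = v := by
    intro v hv
    induction hv using Submodule.span_induction with
    | mem x hx =>
        obtain ⟨j, rfl⟩ := hx
        have hcol : U₁ᵀ j = U₁ *ᵥ Pi.single j 1 := by
          funext i; simp [Matrix.mulVec_single]
        rw [hcol, Matrix.mulVec_mulVec, Matrix.mulVec_mulVec, Matrix.mul_assoc, hU₁,
          Matrix.mul_one]
    | zero => simp
    | add x y _ _ hx hy => rw [Matrix.mulVec_add, Matrix.mulVec_add, hx, hy]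
    | smul c x _ hx => rw [Matrix.mulVec_smul, Matrix.mulVec_smul, hx]
  have hfixA : ∀ v : Fin n → ℝ, U₁ *ᵥ (U₁ᵀ *ᵥ (A *ᵥ v)) = A *ᵥ v := by
    intro v
    exact hfix _ (hspan ▸ LinearMap.mem_range_self A.mulVecLin v)
  have hPA : U₁ * U₁ᵀ * A = A := by
    ext i j
    rw [Matrix.mul_assoc]
    have h1 := congrFun (hfixA (Pi.single j 1)) i
    simp only [Matrix.mulVec_mulVec] at h1
    simpa [Matrix.mulVec_single] using h1
  set B := U₁ᵀ * A * U₁ with hBdef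
  have hBsymm : Bᵀ = B := by
    rw [hBdef]
    simp only [Matrix.transpose_mul, Matrix.transpose_transpose, hAt, Matrix.mul_assoc]
  have hA : A = U₁ * B * U₁ᵀ := by
    have h2 : A * (U₁ * U₁ᵀ) = A := by
      have h3 := congrArg Matrix.transpose hPA
      simp only [Matrix.transpose_mul, Matrix.transpose_transpose, hAt] at h3
      rw [← Matrix.mul_assoc] at h3 ⊢
      exact h3
    calc A = (U₁ * U₁ᵀ * A) * (U₁ * U₁ᵀ) := by rw [hPA, h2]
    _ = U₁ * B * U₁ᵀ := by rw [hBdef]; simp only [Matrix.mul_assoc]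
  have hBdet : IsUnit B.det := by
    by_contra hdet
    have hd0 : B.det = 0 := by
      revert hdet
      by_cases h : B.det = 0 <;> simp [h, isUnit_iff_ne_zero]
    obtain ⟨v, hv0, hvB⟩ := (Matrix.exists_mulVec_eq_zero_iff).2 hd0
    set y := U₁ *ᵥ v with hy
    have hymem : y ∈ Submodule.span ℝ (Set.range U₁ᵀ) := by
      have h4 : y = ∑ a : Fin k, v a • U₁ᵀ a := by
        funext i
        simp [hy, Matrix.mulVec, dotProduct, Finset.sum_apply, mul_comm]
      rw [h4]
      exact Submodule.sum_mem _ fun a _ =>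
        Submodule.smul_mem _ _ (Submodule.subset_span ⟨a, rfl⟩)
    have hAy : A *ᵥ y = 0 := by
      have h1 : U₁ᵀ *ᵥ (A *ᵥ y) = 0 := by
        have h5 : (U₁ᵀ * A * U₁) *ᵥ v = U₁ᵀ *ᵥ (A *ᵥ (U₁ *ᵥ v)) := by
          simp [Matrix.mulVec_mulVec, Matrix.mul_assoc]
        rw [← hy] at h5
        rw [← h5, ← hBdef, hvB]
      have h6 := hfixA y
      rw [h1] at h6
      simpa using h6.symm
    obtain ⟨z, hz⟩ := (hspan ▸ hymem : y ∈ LinearMap.range A.mulVecLin)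
    have hyz : y = A *ᵥ z := hz.symm
    have hy0 : y ⬝ᵥ y = 0 := by
      calc y ⬝ᵥ y = (A *ᵥ z) ⬝ᵥ y := by rw [← hyz]
      _ = z ⬝ᵥ (Aᵀ *ᵥ y) := by rw [dot_mulVec' Aᵀ z y, Matrix.transpose_transpose]
      _ = 0 := by rw [hAt, hAy]; simp
    have hyy : y = 0 := dotProduct_self_eq_zero.mp hy0
    have hv : v = 0 := by
      have h1 : U₁ᵀ *ᵥ y = v := by
        rw [hy, Matrix.mulVec_mulVec, hU₁, Matrix.one_mulVec]
      rw [hyy] at h1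
      simpa using h1.symm
    exact hv0 hv
  set G := Sᵀ * U₁ with hGdef
  have hGrow : ∀ (j : Fin ℓ) (a : Fin k), G j a = U₁ (σ (Fin.castLE hln j)) a := by
    intro j a
    rw [hGdef, hS, transpose_sample_mul]
    rfl
  have hGGdet : IsUnit (Gᵀ * G).det := by
    by_contra hdet
    have hd0 : (Gᵀ * G).det = 0 := by
      revert hdet
      by_cases h : (Gᵀ * G).det = 0 <;> simp [h, isUnit_iff_ne_zero]
    obtain ⟨v, hv0, hvG⟩ := (Matrix.exists_mulVec_eq_zero_iff).2 hd0
    have hGv : G *ᵥ v = 0 := by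
      have h1 : (G *ᵥ v) ⬝ᵥ (G *ᵥ v) = 0 := by
        calc (G *ᵥ v) ⬝ᵥ (G *ᵥ v) = (Gᵀ *ᵥ (G *ᵥ v)) ⬝ᵥ v := by
              rw [← dot_mulVec' G (G *ᵥ v) v]
        _ = ((Gᵀ * G) *ᵥ v) ⬝ᵥ v := by rw [Matrix.mulVec_mulVec]
        _ = 0 := by rw [hvG]; simp
      exact dotProduct_self_eq_zero.mp h1
    let f : (Fin k → ℝ) →ₗ[ℝ] ℝ :=
      { toFun := fun w => w ⬝ᵥ v
        map_add' := fun a b => add_dotProduct a b v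
        map_smul' := fun c a => smul_dotProduct c a v }
    have hker : Submodule.span ℝ
        (Set.range fun j : Fin ℓ => U₁ (σ (Fin.castLE hln j))) ≤ LinearMap.ker f := by
      rw [Submodule.span_le]
      rintro x ⟨j, rfl⟩
      have h2 : U₁ (σ (Fin.castLE hln j)) ⬝ᵥ v = (G *ᵥ v) j := by
        simp only [Matrix.mulVec, dotProduct]
        exact Finset.sum_congr rfl fun a _ => by rw [hGrow j a]
      simp only [SetLike.mem_coe, LinearMap.mem_ker]
      show U₁ (σ (Fin.castLE hln j)) ⬝ᵥ v = 0
      rw [h2, hGv]; rfl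
    have hv : v ⬝ᵥ v = 0 := by
      have h3 : v ∈ LinearMap.ker f := hker (hgood ▸ Submodule.mem_top)
      exact h3
    exact hv0 (dotProduct_self_eq_zero.mp hv)
  -- the explicit pseudoinverse
  set H := (Gᵀ * G)⁻¹ with hHdef
  have hGH : (Gᵀ * G) * H = 1 := Matrix.mul_nonsing_inv _ hGGdet
  have hHG : H * (Gᵀ * G) = 1 := Matrix.nonsing_inv_mul _ hGGdet
  have hBB : B * B⁻¹ = 1 := Matrix.mul_nonsing_inv _ hBdet
  have hBB' : B⁻¹ * B = 1 := Matrix.nonsing_inv_mul _ hBdet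
  have hHsymm : Hᵀ = H := by
    rw [hHdef, Matrix.transpose_nonsing_inv, Matrix.transpose_mul,
      Matrix.transpose_transpose]
  have hBisymm : (B⁻¹)ᵀ = B⁻¹ := by
    rw [Matrix.transpose_nonsing_inv, hBsymm]
  have hW : Sᵀ * A * S = G * B * Gᵀ := by
    rw [hA, hGdef]
    simp only [Matrix.transpose_mul, Matrix.transpose_transpose, Matrix.mul_assoc]
  have hAS : A * S = U₁ * B * Gᵀ := by
    conv_lhs => rw [hA]
    rw [hGdef]
    simp only [Matrix.transpose_mul, Matrix.transpose_transpose, Matrix.mul_assoc]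
  set X := G * H * B⁻¹ * H * Gᵀ with hXdef
  -- cancellation helpers
  have c1 : ∀ {p : Type} [Fintype p] (Z : Matrix (Fin k) p ℝ),
      Gᵀ * (G * (H * Z)) = Z := by
    intro p _ Z
    rw [← Matrix.mul_assoc G H Z, ← Matrix.mul_assoc Gᵀ (G * H) Z,
      ← Matrix.mul_assoc Gᵀ G H, hGH, Matrix.one_mul]
  have c2 : ∀ {p : Type} [Fintype p] (Z : Matrix (Fin k) p ℝ),
      B * (B⁻¹ * Z) = Z := by
    intro p _ Z; rw [← Matrix.mul_assoc, hBB, Matrix.one_mul]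
  have c3 : ∀ {p : Type} [Fintype p] (Z : Matrix (Fin k) p ℝ),
      B⁻¹ * (B * Z) = Z := by
    intro p _ Z; rw [← Matrix.mul_assoc, hBB', Matrix.one_mul]
  have c4 : ∀ {p : Type} [Fintype p] (Z : Matrix (Fin k) p ℝ),
      H * (Gᵀ * (G * Z)) = Z := by
    intro p _ Z
    rw [← Matrix.mul_assoc Gᵀ G Z, ← Matrix.mul_assoc H (Gᵀ * G) Z, hHG, Matrix.one_mul]
  have hWX : (Sᵀ * A * S) * X = G * (H * Gᵀ) := by
    rw [hW, hXdef]
    simp only [Matrix.mul_assoc]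
    rw [c1, c2]
  have hXW : X * (Sᵀ * A * S) = G * (H * Gᵀ) := by
    rw [hW, hXdef]
    simp only [Matrix.mul_assoc]
    rw [c4, c3]
  have hGHGsymm : (G * (H * Gᵀ))ᵀ = G * (H * Gᵀ) := by
    simp only [Matrix.transpose_mul, Matrix.transpose_transpose, hHsymm]
    rw [← Matrix.mul_assoc]
  have hpen : (Sᵀ * A * S) * X * (Sᵀ * A * S) = Sᵀ * A * S ∧
      X * (Sᵀ * A * S) * X = X ∧
      ((Sᵀ * A * S) * X)ᵀ = (Sᵀ * A * S) * X ∧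
      (X * (Sᵀ * A * S))ᵀ = X * (Sᵀ * A * S) := by
    refine ⟨?_, ?_, ?_, ?_⟩
    · rw [hWX, hW]
      simp only [Matrix.mul_assoc]
      rw [c4]
    · rw [hXW, hXdef]
      simp only [Matrix.mul_assoc]
      rw [c4]
    · rw [hWX]; exact hGHGsymm
    · rw [hXW]; exact hGHGsymm
  have hpX : pinv = X := hpinv X hpen
  rw [hpX, hAS, hXdef]
  simp only [Matrix.transpose_mul, Matrix.transpose_transpose, hBsymm, Matrix.mul_assoc]
  rw [c1, c2, c4]
  rw [hA]
  simp only [Matrix.mul_assoc]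

end Det

noncomputable def wgt : ℕ → ℝ := fun d =>
  if d = 0 then 0 else ∏ j ∈ Finset.Icc 2 d, (2 * (j : ℝ)) / (2 * j - 1)

lemma wgt_zero : wgt 0 = 0 := by simp [wgt]

lemma wgt_one : wgt 1 = 1 := by simp [wgt]

lemma one_le_wgt {d : ℕ} (hd : 1 ≤ d) : 1 ≤ wgt d := by
  rw [wgt]; rw [if_neg (by omega)]
  induction d with
  | zero => simp
  | succ e ih =>
      rcases Nat.lt_or_ge (e+1) 2 with h | h
      · have : e + 1 = 1 := by omega
        rw [this]; simp
      · rw [Finset.prod_Icc_succ_top (by omega : 2 ≤ e + 1)]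
        have hfac : (1:ℝ) ≤ (2 * ((e:ℝ)+1)) / (2 * ((e:ℝ)+1) - 1) := by
          have h1 : (1:ℝ) ≤ (e:ℝ) := by
            have : 1 ≤ e := by omega
            exact_mod_cast this
          rw [le_div_iff₀ (by linarith)]
          linarith
        rcases Nat.eq_zero_or_pos e with h0 | h0
        · omega
        · have := ih (by omega)
          push_cast
          nlinarith

lemma wgt_nonneg (d : ℕ) : 0 ≤ wgt d := by
  rcases Nat.eq_zero_or_pos d with h | h
  · simp [h, wgt_zero]
  · linarith [one_le_wgt h]

lemma wgt_succ {d : ℕ} (hd : 1 ≤ d) :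
    wgt (d + 1) = wgt d * (2 * (d + 1 : ℝ)) / (2 * (d + 1 : ℝ) - 1) := by
  rw [wgt, wgt]
  rw [if_neg (by omega), if_neg (by omega)]
  rw [Finset.prod_Icc_succ_top (by omega)]
  push_cast
  ring

lemma wgt_prev {d : ℕ} (hd : 1 ≤ d) :
    wgt (d - 1) ≤ (1 - 1 / (2 * (d:ℝ))) * wgt d := by
  rcases Nat.lt_or_ge d 2 with h | h
  · interval_cases d
    simp [wgt_zero, wgt_one]
    norm_num
  · obtain ⟨e, rfl⟩ : ∃ e, d = e + 1 := ⟨d - 1, by omega⟩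
    have he : 1 ≤ e := by omega
    rw [Nat.add_sub_cancel, wgt_succ he]
    have h1 : (1:ℝ) ≤ (e:ℝ) := by exact_mod_cast he
    have hpos : (0:ℝ) < 2 * ((e:ℝ) + 1) - 1 := by linarith
    push_cast
    have heq : (1 - 1 / (2 * ((e:ℝ)+1))) * (wgt e * (2 * ((e:ℝ) + 1)) / (2 * ((e:ℝ) + 1) - 1))
        = wgt e := by
      field_simp
    rw [heq]

lemma wgt_le_self (d : ℕ) : wgt d ≤ (d : ℝ) := by
  induction d with
  | zero => simp [wgt_zero]
  | succ e ih =>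
      rcases Nat.eq_zero_or_pos e with h | h
      · subst h; simp [wgt_one]
      · rw [wgt_succ h]
        have he1 : (1:ℝ) ≤ (e:ℝ) := by exact_mod_cast h
        have hpos : (0:ℝ) < 2 * ((e:ℝ) + 1) - 1 := by linarith
        rw [div_le_iff₀ hpos]
        push_cast
        have hmul := mul_le_mul_of_nonneg_right ih (show (0:ℝ) ≤ 2*((e:ℝ)+1) by linarith)
        nlinarith

lemma wgt_mono {a b : ℕ} (h : a ≤ b) : wgt a ≤ wgt b := by
  induction b with
  | zero =>
      have : a = 0 := by omega
      simp [this]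
  | succ e ih =>
      rcases Nat.lt_or_ge a (e+1) with h2 | h2
      · have hae : wgt a ≤ wgt e := ih (by omega)
        refine le_trans hae ?_
        rcases Nat.eq_zero_or_pos e with h3 | h3
        · subst h3; simp [wgt_zero, wgt_nonneg]
        · have hle := wgt_prev (d := e + 1) (by omega)
          have h4 : e + 1 - 1 = e := by omega
          rw [h4] at hle
          push_cast at hle
          refine le_trans hle ?_
          have hx : (0:ℝ) ≤ 1 / (2 * ((e:ℝ)+1)) := by positivity
          nlinarith [wgt_nonneg (e+1)]
      · have : a = e + 1 := by omega
        simp [this]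

lemma dot_mulVec'' {m n : Type*} [Fintype m] [Fintype n] (M : Matrix m n ℝ) (x : m → ℝ)
    (y : n → ℝ) : x ⬝ᵥ (M *ᵥ y) = (Mᵀ *ᵥ x) ⬝ᵥ y := by
  rw [Matrix.dotProduct_mulVec, ← Matrix.mulVec_transpose]

section Coh
variable {n k : ℕ} (U : Matrix (Fin n) (Fin k) ℝ)

lemma sum_dot_sq (hU : Uᵀ * U = 1) (w : Fin k → ℝ) :
    ∑ i : Fin n, (U i ⬝ᵥ w) ^ 2 = w ⬝ᵥ w := by
  have h1 : ∑ i : Fin n, (U i ⬝ᵥ w) ^ 2 = (U *ᵥ w) ⬝ᵥ (U *ᵥ w) := by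
    simp only [dotProduct, Matrix.mulVec, sq]
  rw [h1, dot_mulVec'' U (U *ᵥ w) w, Matrix.mulVec_mulVec, hU, Matrix.one_mulVec]

open scoped Classical in
lemma coherence_bound (hU : Uᵀ * U = 1) (μ : ℝ)
    (hμ : ∀ i, ∑ a, (U i a) ^ 2 ≤ μ)
    (V : Submodule ℝ (Fin k → ℝ)) :
    ((k - Module.finrank ℝ V : ℕ) : ℝ) ≤
      μ * (Finset.univ.filter fun i : Fin n => U i ∉ V).card := by
  let e : (Fin k → ℝ) ≃ₗ[ℝ] EuclideanSpace ℝ (Fin k) := (WithLp.linearEquiv 2 ℝ (Fin k → ℝ)).symm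
  set V' : Submodule ℝ (EuclideanSpace ℝ (Fin k)) := V.map (e : (Fin k → ℝ) →ₗ[ℝ] EuclideanSpace ℝ (Fin k)) with hV'
  have hfr : Module.finrank ℝ V' = Module.finrank ℝ V := LinearEquiv.finrank_map_eq e V
  have hmem : ∀ x : Fin k → ℝ, e x ∈ V' ↔ x ∈ V := by
    intro x
    constructor
    · rintro ⟨y, hy, hxy⟩
      have : y = x := e.injective hxy
      rwa [← this]
    · intro hx; exact ⟨x, hx, rfl⟩
  have hdim : Module.finrank ℝ (↥V'ᗮ) = k - Module.finrank ℝ V := by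
    have h1 := Submodule.finrank_add_finrank_orthogonal V'
    have h2 : Module.finrank ℝ (EuclideanSpace ℝ (Fin k)) = k := by
      simp [finrank_euclideanSpace_fin]
    omega
  set d := k - Module.finrank ℝ V with hd
  let b := stdOrthonormalBasis ℝ (↥V'ᗮ)
  let v : Fin (Module.finrank ℝ ↥V'ᗮ) → EuclideanSpace ℝ (Fin k) := fun j => (b j : EuclideanSpace ℝ (Fin k))
  have hon : Orthonormal ℝ v := by
    rw [orthonormal_iff_ite]
    intro a c
    have := (orthonormal_iff_ite.mp b.orthonormal) a c
    simpa [v, Submodule.coe_inner] using this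
  have hinner : ∀ (x y : Fin k → ℝ), (inner ℝ (e x) (e y) : ℝ) = x ⬝ᵥ y := by
    intro x y
    simp [e, PiLp.inner_apply, dotProduct, WithLp.linearEquiv,
      RCLike.inner_apply, mul_comm]
  have hmain : ∀ j, (1:ℝ) = ∑ i ∈ Finset.univ.filter (fun i : Fin n => U i ∉ V),
      (inner ℝ (e (U i)) (v j) : ℝ) ^ 2 := by
    intro j
    have htot : ∑ i : Fin n, (inner ℝ (e (U i)) (v j) : ℝ) ^ 2 = 1 := by
      obtain ⟨w, hw⟩ : ∃ w : Fin k → ℝ, e w = v j := ⟨e.symm (v j), by simp⟩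
      have hiw : ∀ i, (inner ℝ (e (U i)) (v j) : ℝ) = U i ⬝ᵥ w := by
        intro i; rw [← hw, hinner]
      simp only [hiw]
      rw [sum_dot_sq U hU w]
      have h3 : (inner ℝ (e w) (e w) : ℝ) = w ⬝ᵥ w := hinner w w
      rw [← h3, hw]
      have := (orthonormal_iff_ite.mp b.orthonormal) j j
      have h1 := b.orthonormal.1 j
      rw [Submodule.coe_norm] at h1
      simp [v, h1]
    rw [← htot]
    rw [← Finset.sum_filter_add_sum_filter_not Finset.univ (fun i => U i ∉ V)]
    have hzero : ∑ i ∈ Finset.univ.filter (fun i : Fin n => ¬ U i ∉ V),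
        (inner ℝ (e (U i)) (v j) : ℝ) ^ 2 = 0 := by
      refine Finset.sum_eq_zero fun i hi => ?_
      rw [Finset.mem_filter] at hi
      have hiv : U i ∈ V := not_not.mp hi.2
      have : (inner ℝ (e (U i)) (v j) : ℝ) = 0 :=
        Submodule.inner_right_of_mem_orthogonal ((hmem (U i)).2 hiv) (b j).2
      rw [this]; ring
    rw [hzero, add_zero]
  -- combine
  have hbessel : ∀ i : Fin n,
      ∑ j, (inner ℝ (e (U i)) (v j) : ℝ) ^ 2 ≤ μ := by
    intro i
    have h1 := Orthonormal.sum_inner_products_le (𝕜 := ℝ) (s := Finset.univ) (e (U i)) hon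
    have h2 : ∑ j, (inner ℝ (e (U i)) (v j) : ℝ) ^ 2
        = ∑ j ∈ Finset.univ, ‖(inner ℝ (v j) (e (U i)) : ℝ)‖ ^ 2 := by
      refine Finset.sum_congr rfl fun j _ => ?_
      rw [real_inner_comm, Real.norm_eq_abs, sq_abs]
    have h3 : ‖e (U i)‖ ^ 2 ≤ μ := by
      rw [← real_inner_self_eq_norm_sq, hinner]
      simpa [dotProduct, sq] using hμ i
    rw [h2]
    exact le_trans h1 h3
  have hcalc : (d : ℝ) ≤
      ∑ i ∈ Finset.univ.filter (fun i : Fin n => U i ∉ V), μ := by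
    calc (d : ℝ) = ∑ _j : Fin (Module.finrank ℝ ↥V'ᗮ), (1:ℝ) := by
          simp [hdim, ← hd]
    _ = ∑ j, ∑ i ∈ Finset.univ.filter (fun i : Fin n => U i ∉ V),
          (inner ℝ (e (U i)) (v j) : ℝ) ^ 2 := by
          exact Finset.sum_congr rfl fun j _ => hmain j
    _ = ∑ i ∈ Finset.univ.filter (fun i : Fin n => U i ∉ V),
          ∑ j, (inner ℝ (e (U i)) (v j) : ℝ) ^ 2 := Finset.sum_comm
    _ ≤ ∑ i ∈ Finset.univ.filter (fun i : Fin n => U i ∉ V), μ :=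
          Finset.sum_le_sum fun i _ => hbessel i
  rw [Finset.sum_const, nsmul_eq_mul, mul_comm] at hcalc
  exact hcalc

end Coh

-- finrank of span grows by one when inserting a vector outside
lemma finrank_span_insert' {K : Type*} [Field K] {V : Type*} [AddCommGroup V] [Module K V]
    [FiniteDimensional K V] (s : Set V) (x : V) (hx : x ∉ Submodule.span K s) :
    Module.finrank K (Submodule.span K (insert x s)) =
      Module.finrank K (Submodule.span K s) + 1 := by
  classical
  have hx0 : x ≠ 0 := fun h => hx (h ▸ Submodule.zero_mem _)
  rw [Submodule.span_insert]
  have hinf : Submodule.span K {x} ⊓ Submodule.span K s = ⊥ := by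
    rw [eq_bot_iff]
    rintro v ⟨hv1, hv2⟩
    obtain ⟨c, rfl⟩ := Submodule.mem_span_singleton.mp hv1
    rcases eq_or_ne c 0 with h | h
    · simp [h]
    · exfalso
      apply hx
      have : c⁻¹ • (c • x) ∈ Submodule.span K s := Submodule.smul_mem _ _ hv2
      rwa [smul_smul, inv_mul_cancel₀ h, one_smul] at this
  have := Submodule.finrank_sup_add_finrank_inf_eq (Submodule.span K {x}) (Submodule.span K s)
  rw [hinf] at this
  simp only [finrank_bot, add_zero] at this
  rw [this, finrank_span_singleton hx0]
  omega

section Step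
variable {n k : ℕ} (U : Matrix (Fin n) (Fin k) ℝ)

open scoped Classical

noncomputable def dft (T : Finset (Fin n)) : ℕ :=
  k - Module.finrank ℝ (Submodule.span ℝ (U '' (T : Set (Fin n))))

lemma dft_empty : dft U (∅ : Finset (Fin n)) = k := by
  unfold dft
  rw [Finset.coe_empty, Set.image_empty (f := U), Submodule.span_empty]
  simp

open scoped Classical in
lemma step_bound (hU : Uᵀ * U = 1) (μ : ℝ) (hμ : ∀ i, ∑ a, (U i a) ^ 2 ≤ μ)
    (T : Finset (Fin n)) :
    ∑ i ∈ Tᶜ, wgt (dft U (insert i T)) ≤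
      (1 - 1 / (2 * (n * μ))) * (Tᶜ.card : ℝ) * wgt (dft U T) := by
  set V := Submodule.span ℝ (U '' (T : Set (Fin n))) with hV
  rcases Nat.eq_zero_or_pos (dft U T) with hd0 | hd1
  · -- defect zero: all summands are zero
    have hall : ∀ i ∈ Tᶜ, wgt (dft U (insert i T)) = 0 := by
      intro i _
      have hmono : V ≤ Submodule.span ℝ (U '' ((insert i T : Finset (Fin n)) : Set (Fin n))) :=
        Submodule.span_mono (Set.image_mono (by simp [Finset.coe_insert]))
      have := Submodule.finrank_mono hmono
      have hd : dft U (insert i T) = 0 := by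
        have h5 : dft U (insert i T) ≤ dft U T := by
          unfold dft
          rw [← hV]
          omega
        omega
      rw [hd, wgt_zero]
    rw [Finset.sum_congr rfl hall, Finset.sum_const, hd0, wgt_zero]
    simp
  · set d := dft U T with hddef
    -- split the complement according to membership of the row in V
    have hsplit := Finset.sum_filter_add_sum_filter_not Tᶜ (fun i => U i ∈ V)
      (fun i => wgt (dft U (insert i T)))
    set s := (Tᶜ.filter (fun i => U i ∈ V)).card with hs
    set r := (Tᶜ.filter (fun i => U i ∉ V)).card with hr
    have hdg : d = k - Module.finrank ℝ V := by
      unfold d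
      unfold dft
      rw [← hV]
    have hstay : ∀ i ∈ Tᶜ.filter (fun i => U i ∈ V), wgt (dft U (insert i T)) = wgt d := by
      intro i hi
      rw [Finset.mem_filter] at hi
      have : Submodule.span ℝ (U '' ((insert i T : Finset (Fin n)) : Set (Fin n))) = V := by
        rw [Finset.coe_insert, Set.image_insert_eq (f := U), hV]
        exact Submodule.span_insert_eq_span hi.2
      unfold d
      unfold dft
      rw [this]
    have hesc : ∀ i ∈ Tᶜ.filter (fun i => U i ∉ V), wgt (dft U (insert i T)) = wgt (d - 1) := by
      intro i hi
      rw [Finset.mem_filter] at hi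
      have hfr : Module.finrank ℝ (Submodule.span ℝ (U '' ((insert i T : Finset (Fin n)) : Set (Fin n))))
          = Module.finrank ℝ V + 1 := by
        rw [Finset.coe_insert, Set.image_insert_eq (f := U)]
        exact finrank_span_insert' _ _ hi.2
      have hdd : dft U (insert i T) = d - 1 := by
        unfold dft
        rw [hfr]
        omega
      rw [hdd]
    rw [Finset.sum_congr rfl hstay, Finset.sum_congr rfl hesc, Finset.sum_const,
      Finset.sum_const, ← hs, ← hr] at hsplit
    rw [← hsplit]
    -- coherence bound
    have hTsub : ∀ i ∈ T, U i ∈ V := fun i hi =>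
      Submodule.subset_span (Set.mem_image_of_mem _ (by exact_mod_cast hi))
    have hfilter_eq : Tᶜ.filter (fun i => U i ∉ V) = Finset.univ.filter (fun i => U i ∉ V) := by
      ext i
      simp only [Finset.mem_filter, Finset.mem_compl, Finset.mem_univ, true_and]
      constructor
      · rintro ⟨_, h⟩; exact h
      · intro h
        exact ⟨fun hiT => h (hTsub i hiT), h⟩
    have hcoh : (d : ℝ) ≤ μ * r := by
      have h0 := coherence_bound U hU μ hμ V
      rw [hdg, hr, hfilter_eq]
      exact h0
    have hd1' : (1:ℝ) ≤ (d:ℝ) := by exact_mod_cast hd1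
    have hμr : (0:ℝ) < μ * r := lt_of_lt_of_le (by linarith) hcoh
    have hrpos : (0:ℝ) < r := by
      rcases Nat.eq_zero_or_pos r with h | h
      · exfalso
        rw [h, Nat.cast_zero, mul_zero] at hμr
        exact absurd hμr (lt_irrefl 0)
      · exact_mod_cast h
    have hμpos : (0:ℝ) < μ := by
      by_contra h
      push_neg at h
      nlinarith
    have hnpos : (0:ℝ) < n := by
      have : r ≤ n := le_trans (Finset.card_filter_le _ _)
        (le_trans (Finset.card_le_univ _) (le_of_eq (by simp)))
      have : (r:ℝ) ≤ n := by exact_mod_cast this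
      linarith
    have hsr : (s : ℝ) + r ≤ n := by
      have h1 : s + r = Tᶜ.card := by
        rw [hs, hr]
        exact Finset.card_filter_add_card_filter_not _
      have h2 : Tᶜ.card ≤ n :=
        le_trans (Finset.card_le_univ _) (le_of_eq (by simp))
      have : ((s + r : ℕ) : ℝ) ≤ n := by
        rw [h1]; exact_mod_cast h2
      push_cast at this
      linarith
    have hcard : (Tᶜ.card : ℝ) = (s:ℝ) + r := by
      have h1 : s + r = Tᶜ.card := by
        rw [hs, hr]
        exact Finset.card_filter_add_card_filter_not _
      rw [← h1]; push_cast; ring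
    rw [hcard]
    have h2d : (0:ℝ) < 2 * (d:ℝ) := by linarith
    have h2K : (0:ℝ) < 2 * ((n:ℝ) * μ) := by positivity
    have e1 : wgt (d - 1) ≤ (1 - 1/(2*(d:ℝ))) * wgt d := wgt_prev hd1
    have hkey : ((s:ℝ) + r) * (2 * (d:ℝ)) ≤ (r:ℝ) * (2 * ((n:ℝ) * μ)) := by
      nlinarith [mul_le_mul_of_nonneg_right hsr (le_of_lt h2d),
        mul_le_mul_of_nonneg_left hcoh (show (0:ℝ) ≤ 2 * n by positivity)]
    have hdiff : ((s:ℝ)+r)/(2*((n:ℝ)*μ)) ≤ (r:ℝ)/(2*(d:ℝ)) := by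
      rw [div_le_div_iff₀ h2K h2d]
      exact hkey
    have hsnn : (0:ℝ) ≤ s := by positivity
    calc s • wgt d + r • wgt (d-1)
        = (s:ℝ) * wgt d + (r:ℝ) * wgt (d-1) := by simp [nsmul_eq_mul]
    _ ≤ (s:ℝ) * wgt d + (r:ℝ) * ((1 - 1/(2*(d:ℝ))) * wgt d) := by
        nlinarith [mul_le_mul_of_nonneg_left e1 (Nat.cast_nonneg (α := ℝ) r)]
    _ = ((s:ℝ)+r) * wgt d - ((r:ℝ)/(2*(d:ℝ))) * wgt d := by ring
    _ ≤ ((s:ℝ)+r) * wgt d - (((s:ℝ)+r)/(2*((n:ℝ)*μ))) * wgt d := by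
        nlinarith [mul_le_mul_of_nonneg_right hdiff (wgt_nonneg d)]
    _ = (1 - 1 / (2 * ((n:ℝ) * μ))) * ((s:ℝ)+r) * wgt d := by ring

end Step

open scoped Classical in
lemma double_count {n : ℕ} (f : Finset (Fin n) → ℝ) (t : ℕ) :
    ∑ T ∈ Finset.powersetCard (t+1) (Finset.univ : Finset (Fin n)), ((t+1 : ℕ) : ℝ) * f T
      = ∑ T' ∈ Finset.powersetCard t (Finset.univ : Finset (Fin n)),
          ∑ i ∈ T'ᶜ, f (insert i T') := by
  have h1 : ∀ T ∈ Finset.powersetCard (t+1) (Finset.univ : Finset (Fin n)),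
      ((t+1:ℕ):ℝ) * f T = ∑ _i ∈ T, f T := by
    intro T hT
    rw [Finset.sum_const, (Finset.mem_powersetCard.mp hT).2, nsmul_eq_mul]
  rw [Finset.sum_congr rfl h1]
  rw [← Finset.sum_sigma (Finset.powersetCard (t+1) Finset.univ) (fun T => T)
    (fun p => f p.1)]
  rw [← Finset.sum_sigma (Finset.powersetCard t Finset.univ) (fun T' => T'ᶜ)
    (fun p => f (insert p.2 p.1))]
  refine Finset.sum_nbij' (fun p => ⟨p.1.erase p.2, p.2⟩) (fun p => ⟨insert p.2 p.1, p.2⟩)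
    ?_ ?_ ?_ ?_ ?_
  · rintro ⟨T, i⟩ hp
    rw [Finset.mem_sigma] at hp ⊢
    obtain ⟨hT, hi⟩ := hp
    rw [Finset.mem_powersetCard] at hT
    constructor
    · rw [Finset.mem_powersetCard]
      refine ⟨Finset.subset_univ _, ?_⟩
      rw [Finset.card_erase_of_mem hi, hT.2]
      omega
    · simp [Finset.mem_compl, Finset.notMem_erase]
  · rintro ⟨T', i⟩ hp
    rw [Finset.mem_sigma] at hp ⊢
    obtain ⟨hT, hi⟩ := hp
    rw [Finset.mem_powersetCard] at hT
    rw [Finset.mem_compl] at hi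
    constructor
    · rw [Finset.mem_powersetCard]
      refine ⟨Finset.subset_univ _, ?_⟩
      rw [Finset.card_insert_of_notMem hi, hT.2]
    · exact Finset.mem_insert_self _ _
  · rintro ⟨T, i⟩ hp
    rw [Finset.mem_sigma] at hp
    have := Finset.insert_erase hp.2
    simp only [this]
  · rintro ⟨T', i⟩ hp
    rw [Finset.mem_sigma] at hp
    have hi := Finset.mem_compl.mp hp.2
    have := Finset.erase_insert hi
    simp only [this]
  · rintro ⟨T, i⟩ hp
    rw [Finset.mem_sigma] at hp
    simp only [Finset.insert_erase hp.2]

open scoped Classical in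
lemma sum_wgt_le {n k : ℕ} (U : Matrix (Fin n) (Fin k) ℝ)
    (hU : Uᵀ * U = 1) (μ : ℝ) (hμ : ∀ i, ∑ a, (U i a) ^ 2 ≤ μ)
    (hγ : 0 ≤ 1 - 1/(2*((n:ℝ)*μ))) (t : ℕ) :
    ∑ T ∈ Finset.powersetCard t (Finset.univ : Finset (Fin n)), wgt (dft U T)
      ≤ (1 - 1/(2*((n:ℝ)*μ)))^t * (n.choose t) * wgt k := by
  set γ := 1 - 1/(2*((n:ℝ)*μ)) with hγdef
  induction t with
  | zero =>
      rw [Finset.powersetCard_zero]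
      simp [dft_empty]
  | succ t ih =>
      have hpos : (0:ℝ) < ((t+1:ℕ):ℝ) := by positivity
      rw [← mul_le_mul_iff_right₀ hpos]
      have hid := double_count (fun T => wgt (dft U T)) t
      rw [← Finset.mul_sum] at hid
      rw [hid]
      have hstep : ∀ T' ∈ Finset.powersetCard t (Finset.univ : Finset (Fin n)),
          ∑ i ∈ T'ᶜ, wgt (dft U (insert i T')) ≤ γ * ((n - t : ℕ) : ℝ) * wgt (dft U T') := by
        intro T' hT'
        have hcompl : (T'ᶜ.card : ℝ) = ((n - t : ℕ) : ℝ) := by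
          rw [Finset.card_compl, Fintype.card_fin, (Finset.mem_powersetCard.mp hT').2]
        have := step_bound U hU μ hμ T'
        rw [hcompl] at this
        exact this
      calc ∑ T' ∈ Finset.powersetCard t (Finset.univ : Finset (Fin n)),
            ∑ i ∈ T'ᶜ, wgt (dft U (insert i T'))
          ≤ ∑ T' ∈ Finset.powersetCard t (Finset.univ : Finset (Fin n)),
            γ * ((n - t : ℕ) : ℝ) * wgt (dft U T') := Finset.sum_le_sum hstep
      _ = γ * ((n - t : ℕ) : ℝ) *
            ∑ T' ∈ Finset.powersetCard t (Finset.univ : Finset (Fin n)), wgt (dft U T') := by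
            rw [Finset.mul_sum]
      _ ≤ γ * ((n - t : ℕ) : ℝ) * (γ^t * (n.choose t) * wgt k) := by
            have hnn : 0 ≤ γ * ((n - t : ℕ) : ℝ) := by positivity
            exact mul_le_mul_of_nonneg_left ih hnn
      _ = γ^(t+1) * (((n.choose t) * (n - t) : ℕ) : ℝ) * wgt k := by
            push_cast
            ring
      _ = γ^(t+1) * (((n.choose (t+1)) * (t+1) : ℕ) : ℝ) * wgt k := by
            rw [Nat.choose_succ_right_eq]
      _ = ((t+1:ℕ):ℝ) * (γ^(t+1) * (n.choose (t+1)) * wgt k) := by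
            push_cast
            ring

open scoped Classical in
lemma bad_lt {n k ℓ : ℕ} (hln : ℓ ≤ n) (U : Matrix (Fin n) (Fin k) ℝ)
    (hU : Uᵀ * U = 1) (hk : 1 ≤ k) (μ δ ε : ℝ)
    (hμ : ∀ i, ∑ a, (U i a) ^ 2 ≤ μ)
    (hδ : δ ∈ Set.Ioo (0:ℝ) 1) (hε : ε ∈ Set.Ioo (0:ℝ) 1)
    (hl : (ℓ:ℝ) ≥ 2*((n:ℝ)*μ)*Real.log (k/δ)/(1-ε)^2) :
    (((Finset.powersetCard ℓ (Finset.univ : Finset (Fin n))).filter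
      (fun T => dft U T ≠ 0)).card : ℝ) < δ * (n.choose ℓ) := by
  -- trace identity gives k ≤ n μ
  have htr : ∑ i : Fin n, ∑ a : Fin k, (U i a)^2 = (k : ℝ) := by
    have h1 : ∀ a : Fin k, (Uᵀ * U) a a = ∑ i : Fin n, (U i a)^2 := by
      intro a
      simp [Matrix.mul_apply, sq]
    have h2 : ∑ a : Fin k, (Uᵀ * U) a a = (k:ℝ) := by
      rw [hU]
      simp [Matrix.one_apply]
    rw [Finset.sum_comm]
    rw [← h2]
    exact Finset.sum_congr rfl fun a _ => (h1 a).symm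
  have hKk : (k:ℝ) ≤ (n:ℝ) * μ := by
    rw [← htr]
    calc ∑ i : Fin n, ∑ a : Fin k, (U i a)^2 ≤ ∑ _i : Fin n, μ :=
          Finset.sum_le_sum fun i _ => hμ i
    _ = (n:ℝ) * μ := by simp [mul_comm]
  have hk1 : (1:ℝ) ≤ (k:ℝ) := by exact_mod_cast hk
  have hK1 : (1:ℝ) ≤ (n:ℝ) * μ := le_trans hk1 hKk
  set K := (n:ℝ) * μ with hKdef
  have hKpos : (0:ℝ) < K := by linarith
  have hγ : (0:ℝ) ≤ 1 - 1/(2*K) := by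
    have h1 : 1/(2*K) ≤ 1/2 := by
      rw [div_le_div_iff₀ (by linarith) (by norm_num)]
      linarith
    linarith
  have hγexp : 1 - 1/(2*K) ≤ Real.exp (-(1/(2*K))) := by
    have := Real.add_one_le_exp (-(1/(2*K)))
    linarith
  have hL : 0 < Real.log ((k:ℝ)/δ) := by
    apply Real.log_pos
    rw [lt_div_iff₀ hδ.1]
    nlinarith [hδ.2]
  have hls : (ℓ:ℝ)/(2*K) > Real.log ((k:ℝ)/δ) := by
    have hε2 : 0 < (1-ε)^2 := by
      have := hε.2
      nlinarith
    have hε2' : (1-ε)^2 < 1 := by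
      have h1 := hε.1
      have h2 := hε.2
      nlinarith
    have h2KL : 0 < 2*K*Real.log ((k:ℝ)/δ) := by positivity
    have hstrict : 2*K*Real.log ((k:ℝ)/δ)/(1-ε)^2 > 2*K*Real.log ((k:ℝ)/δ) := by
      rw [gt_iff_lt, lt_div_iff₀ hε2]
      nlinarith [mul_lt_mul_of_pos_left hε2' h2KL]
    have : (ℓ:ℝ) > 2*K*Real.log ((k:ℝ)/δ) := lt_of_lt_of_le hstrict hl
    rw [gt_iff_lt, lt_div_iff₀ (by linarith : (0:ℝ) < 2*K)]
    linarith [this]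
  have hexp : Real.exp (-((ℓ:ℝ)/(2*K))) < δ/(k:ℝ) := by
    have h1 : Real.exp (-((ℓ:ℝ)/(2*K))) < Real.exp (-(Real.log ((k:ℝ)/δ))) :=
      Real.exp_lt_exp.mpr (by linarith)
    have h2 : Real.exp (-(Real.log ((k:ℝ)/δ))) = δ/(k:ℝ) := by
      rw [Real.exp_neg, Real.exp_log (div_pos (by linarith) hδ.1), inv_div]
    linarith [h1, le_of_eq h2]
  have hγl : (1 - 1/(2*K))^ℓ ≤ Real.exp (-((ℓ:ℝ)/(2*K))) := by
    calc (1 - 1/(2*K))^ℓ ≤ (Real.exp (-(1/(2*K))))^ℓ := pow_le_pow_left₀ hγ hγexp ℓ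
    _ = Real.exp (-(1/(2*K)) * ℓ) := by
        rw [← Real.exp_nat_mul]
        ring_nf
    _ = Real.exp (-((ℓ:ℝ)/(2*K))) := by
        congr 1
        ring
  -- count bad sets
  have hcount : (((Finset.powersetCard ℓ (Finset.univ : Finset (Fin n))).filter
      (fun T => dft U T ≠ 0)).card : ℝ) ≤
      ∑ T ∈ Finset.powersetCard ℓ (Finset.univ : Finset (Fin n)), wgt (dft U T) := by
    rw [Finset.card_eq_sum_ones]
    push_cast
    calc (∑ _T ∈ (Finset.powersetCard ℓ (Finset.univ : Finset (Fin n))).filter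
          (fun T => dft U T ≠ 0), (1:ℝ))
        ≤ ∑ T ∈ (Finset.powersetCard ℓ (Finset.univ : Finset (Fin n))).filter
          (fun T => dft U T ≠ 0), wgt (dft U T) := by
          refine Finset.sum_le_sum fun T hT => ?_
          rw [Finset.mem_filter] at hT
          exact one_le_wgt (by omega)
    _ ≤ ∑ T ∈ Finset.powersetCard ℓ (Finset.univ : Finset (Fin n)), wgt (dft U T) :=
          Finset.sum_le_sum_of_subset_of_nonneg (Finset.filter_subset _ _)
            (fun T _ _ => wgt_nonneg _)
  have hsum := sum_wgt_le U hU μ hμ (by rw [← hKdef]; exact hγ) ℓ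
  have hChoose : (1:ℝ) ≤ (n.choose ℓ : ℝ) := by
    have : 0 < n.choose ℓ := Nat.choose_pos hln
    exact_mod_cast this
  calc (((Finset.powersetCard ℓ (Finset.univ : Finset (Fin n))).filter
      (fun T => dft U T ≠ 0)).card : ℝ)
      ≤ ∑ T ∈ Finset.powersetCard ℓ (Finset.univ : Finset (Fin n)), wgt (dft U T) := hcount
  _ ≤ (1 - 1/(2*K))^ℓ * (n.choose ℓ) * wgt k := by rw [hKdef]; exact hsum
  _ ≤ (1 - 1/(2*K))^ℓ * (n.choose ℓ) * k :=
      mul_le_mul_of_nonneg_left (wgt_le_self k) (by positivity)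
  _ ≤ Real.exp (-((ℓ:ℝ)/(2*K))) * (n.choose ℓ) * k := by
      refine mul_le_mul_of_nonneg_right ?_ (by positivity)
      exact mul_le_mul_of_nonneg_right hγl (by positivity)
  _ < (δ/(k:ℝ)) * (n.choose ℓ) * k := by
      have hkpos : (0:ℝ) < (k:ℝ) := by linarith
      have hCpos : (0:ℝ) < ((n.choose ℓ):ℝ) := by linarith
      exact mul_lt_mul_of_pos_right (mul_lt_mul_of_pos_right hexp hCpos) hkpos
  _ = δ * (n.choose ℓ) := by
      have hkne : ((k:ℝ)) ≠ 0 := by linarith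
      field_simp

section Fiber
variable {n ℓ : ℕ}

open scoped Classical

noncomputable def firstImage (hln : ℓ ≤ n) (σ : Equiv.Perm (Fin n)) : Finset (Fin n) :=
  Finset.image (fun j : Fin ℓ => σ (Fin.castLE hln j)) Finset.univ

lemma firstImage_mem (hln : ℓ ≤ n) (σ : Equiv.Perm (Fin n)) :
    firstImage hln σ ∈ Finset.powersetCard ℓ (Finset.univ : Finset (Fin n)) := by
  rw [Finset.mem_powersetCard]
  refine ⟨Finset.subset_univ _, ?_⟩
  rw [firstImage, Finset.card_image_of_injective _
    (show Function.Injective (fun j : Fin ℓ => σ (Fin.castLE hln j)) from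
      fun a b hab => Fin.castLE_injective hln (Equiv.injective σ hab)),
    Finset.card_univ, Fintype.card_fin]

lemma subtypeCongr_apply_pos {α : Type*} {p q : α → Prop} [DecidablePred p] [DecidablePred q]
    (e : { x // p x } ≃ { x // q x }) (f : { x // ¬p x } ≃ { x // ¬q x }) (x : α) (hx : p x) :
    (Equiv.subtypeCongr e f) x = (e ⟨x, hx⟩ : { x // q x }) := by
  simp [Equiv.subtypeCongr, Equiv.sumCompl_symm_apply_of_pos hx]

lemma firstImage_mul (hln : ℓ ≤ n) (π σ : Equiv.Perm (Fin n)) :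
    firstImage hln (π * σ) = (firstImage hln σ).image π := by
  rw [firstImage, firstImage, Finset.image_image]
  rfl

lemma fiber_card_eq (hln : ℓ ≤ n) (T T' : Finset (Fin n))
    (hT : T ∈ Finset.powersetCard ℓ (Finset.univ : Finset (Fin n)))
    (hT' : T' ∈ Finset.powersetCard ℓ (Finset.univ : Finset (Fin n))) :
    (Finset.univ.filter fun σ : Equiv.Perm (Fin n) => firstImage hln σ = T).card =
    (Finset.univ.filter fun σ : Equiv.Perm (Fin n) => firstImage hln σ = T').card := by
  rw [Finset.mem_powersetCard] at hT hT'
  have hcard : T.card = T'.card := by rw [hT.2, hT'.2]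
  have hcardc : Tᶜ.card = T'ᶜ.card := by
    rw [Finset.card_compl, Finset.card_compl, hcard]
  let e : { x // x ∈ T } ≃ { x // x ∈ T' } := Finset.equivOfCardEq hcard
  let f : { x // ¬ x ∈ T } ≃ { x // ¬ x ∈ T' } :=
    ((Equiv.subtypeEquivRight (fun x => (Finset.mem_compl (s := T)).symm)).trans
      (Finset.equivOfCardEq hcardc)).trans
      (Equiv.subtypeEquivRight (fun x => Finset.mem_compl (s := T')))
  let π : Equiv.Perm (Fin n) := Equiv.subtypeCongr e f
  have hπ : ∀ x ∈ T, π x ∈ T' := by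
    intro x hx
    rw [subtypeCongr_apply_pos e f x hx]
    exact (e ⟨x, hx⟩).2
  have himg : T.image π = T' := by
    apply Finset.eq_of_subset_of_card_le
    · intro y hy
      rw [Finset.mem_image] at hy
      obtain ⟨x, hx, rfl⟩ := hy
      exact hπ x hx
    · rw [Finset.card_image_of_injective _ π.injective, hcard]
  have himg' : T'.image π.symm = T := by
    rw [← himg, Finset.image_image]
    have : (π.symm ∘ π) = id := by
      funext x; simp
    rw [this, Finset.image_id]
  apply Finset.card_bij' (fun σ _ => π * σ) (fun σ _ => π⁻¹ * σ)
  · intro σ hσ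
    rw [Finset.mem_filter] at hσ ⊢
    refine ⟨Finset.mem_univ _, ?_⟩
    rw [firstImage_mul, hσ.2, himg]
  · intro σ hσ
    rw [Finset.mem_filter] at hσ ⊢
    refine ⟨Finset.mem_univ _, ?_⟩
    have : (π⁻¹ : Equiv.Perm (Fin n)) = π.symm := rfl
    rw [firstImage_mul, hσ.2, this, himg']
  · intro σ _; group
  · intro σ _; group

end Fiber


open scoped Classical in
/-- exact recovery, cf. Talwalkar–Rostamizadeh. Let `A` be PSD of rank
exactly `k`, let `U₁` have orthonormal columns spanning the range of `A`, and let
`τ = μ₀(U₁)`.  Fix `δ, ε ∈ (0,1)`.  If `ℓ ≥ 2τk log(k/δ)/(1−ε)²` columns of `A` are sampled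
uniformly without replacement, then with probability exceeding `1 − δ` the Nyström extension
recovers `A` exactly: `A = C W† Cᵗ`. -/
theorem naive_nystrom_exact_recovery {n ℓ k : ℕ} (hln : ℓ ≤ n)
    (A : Matrix (Fin n) (Fin n) ℝ) (hA : A.PosSemidef) (hrank : A.rank = k)
    (U₁ : Matrix (Fin n) (Fin k) ℝ) (hU₁ : U₁ᵀ * U₁ = 1)
    (hspan : Submodule.span ℝ (Set.range U₁ᵀ) = LinearMap.range A.mulVecLin)
    (τ δ ε : ℝ) (hτ : τ = coherence U₁)
    (hδ : δ ∈ Set.Ioo (0 : ℝ) 1) (hε : ε ∈ Set.Ioo (0 : ℝ) 1)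
    (hℓ : (ℓ : ℝ) ≥ 2 * τ * k * Real.log (k / δ) / (1 - ε) ^ 2) :
    (1 : ℝ) - δ <
      ((Finset.univ.filter fun σ : Equiv.Perm (Fin n) =>
          A = (A * sampleMatrix hln σ) *
              pinv ((sampleMatrix hln σ)ᵀ * A * sampleMatrix hln σ) *
              (A * sampleMatrix hln σ)ᵀ).card : ℝ) /
        (Fintype.card (Equiv.Perm (Fin n)) : ℝ) := by
  have hNpos : 0 < (Fintype.card (Equiv.Perm (Fin n)) : ℝ) := by
    exact_mod_cast Fintype.card_pos
  by_cases hk0 : k = 0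
  · -- rank zero: A = 0 and recovery is trivial for every permutation
    have hA0 : A = 0 := by
      have h1 : LinearMap.range A.mulVecLin = ⊥ := by
        have h2 : Module.finrank ℝ (LinearMap.range A.mulVecLin) = 0 := by
          rw [show Module.finrank ℝ (LinearMap.range A.mulVecLin) = A.rank from rfl, hrank, hk0]
        exact Submodule.finrank_eq_zero.mp h2
      have h2 : ∀ x, A *ᵥ x = 0 := by
        intro x
        have h3 : A.mulVecLin x ∈ (⊥ : Submodule ℝ (Fin n → ℝ)) :=
          h1 ▸ LinearMap.mem_range_self _ x
        simpa using h3
      ext i j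
      have h4 := congrFun (h2 (Pi.single j 1)) i
      simpa [Matrix.mulVec_single] using h4
    have hall : (Finset.univ.filter fun σ : Equiv.Perm (Fin n) =>
          A = (A * sampleMatrix hln σ) *
              pinv ((sampleMatrix hln σ)ᵀ * A * sampleMatrix hln σ) *
              (A * sampleMatrix hln σ)ᵀ) = Finset.univ := by
      rw [Finset.filter_true_of_mem]
      intro σ _
      rw [hA0]
      simp
    rw [hall, Finset.card_univ, div_self (ne_of_gt hNpos)]
    linarith [hδ.1]
  · have hk : 1 ≤ k := by omega
    have hAt : Aᵀ = A := by
      rw [← Matrix.conjTranspose_eq_transpose_of_trivial]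
      exact hA.1
    have hkn : k ≤ n := by
      rw [← hrank]
      have h1 := A.rank_le_card_width
      simpa using h1
    have hn1 : 1 ≤ n := le_trans hk hkn
    have hkR : (1:ℝ) ≤ (k:ℝ) := by exact_mod_cast hk
    set μ := ⨆ i : Fin n, ∑ a : Fin k, (U₁ i a)^2 with hμdef
    have hμ : ∀ i, ∑ a, (U₁ i a)^2 ≤ μ := fun i =>
      le_ciSup (f := fun i : Fin n => ∑ a : Fin k, (U₁ i a)^2)
        (Set.Finite.bddAbove (Set.finite_range _)) i
    have hτμ : τ * (k:ℝ) = (n:ℝ) * μ := by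
      rw [hτ, coherence, ← hμdef]
      have hkne : (k:ℝ) ≠ 0 := by linarith
      field_simp
    have hl : (ℓ:ℝ) ≥ 2*((n:ℝ)*μ)*Real.log ((k:ℝ)/δ)/(1-ε)^2 := by
      have h2 : 2*τ*(k:ℝ) = 2*((n:ℝ)*μ) := by linarith
      rw [← h2]
      exact hℓ
    have hbad := bad_lt hln U₁ hU₁ hk μ δ ε hμ hδ hε hl
    -- fibre counting over permutations
    obtain ⟨T₀, hT₀⟩ : (Finset.powersetCard ℓ (Finset.univ : Finset (Fin n))).Nonempty := by
      rw [← Finset.card_pos, Finset.card_powersetCard, Finset.card_univ, Fintype.card_fin]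
      exact Nat.choose_pos hln
    have hfib : ∀ T ∈ Finset.powersetCard ℓ (Finset.univ : Finset (Fin n)),
        (Finset.univ.filter fun σ : Equiv.Perm (Fin n) => firstImage hln σ = T).card =
        (Finset.univ.filter fun σ : Equiv.Perm (Fin n) => firstImage hln σ = T₀).card :=
      fun T hT => fiber_card_eq hln T T₀ hT hT₀
    have htot : Fintype.card (Equiv.Perm (Fin n)) =
        (n.choose ℓ) * (Finset.univ.filter
          fun σ : Equiv.Perm (Fin n) => firstImage hln σ = T₀).card := by
      rw [← Finset.card_univ,
        Finset.card_eq_sum_card_fiberwise (fun σ _ => firstImage_mem hln σ),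
        Finset.sum_congr rfl hfib, Finset.sum_const, smul_eq_mul,
        Finset.card_powersetCard, Finset.card_univ, Fintype.card_fin]
    -- the good permutations
    have hEsub : (Finset.univ.filter
          fun σ : Equiv.Perm (Fin n) => dft U₁ (firstImage hln σ) = 0) ⊆
        (Finset.univ.filter fun σ : Equiv.Perm (Fin n) =>
          A = (A * sampleMatrix hln σ) *
              pinv ((sampleMatrix hln σ)ᵀ * A * sampleMatrix hln σ) *
              (A * sampleMatrix hln σ)ᵀ) := by
      intro σ hσ
      rw [Finset.mem_filter] at hσ ⊢
      refine ⟨Finset.mem_univ _, ?_⟩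
      have h1 : (U₁ '' ↑(firstImage hln σ)) =
          Set.range (fun j : Fin ℓ => U₁ (σ (Fin.castLE hln j))) := by
        rw [firstImage, Finset.coe_image, Finset.coe_univ, Set.image_univ, ← Set.range_comp U₁]
        rfl
      have h2 := hσ.2
      unfold dft at h2
      rw [h1] at h2
      have h3 : Module.finrank ℝ (Submodule.span ℝ
          (Set.range fun j : Fin ℓ => U₁ (σ (Fin.castLE hln j)))) ≤ k := by
        have h4 := Submodule.finrank_le (Submodule.span ℝ
          (Set.range fun j : Fin ℓ => U₁ (σ (Fin.castLE hln j))))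
        rwa [Module.finrank_fin_fun] at h4
      have hspanT : Submodule.span ℝ
          (Set.range fun j : Fin ℓ => U₁ (σ (Fin.castLE hln j))) = ⊤ := by
        apply Submodule.eq_top_of_finrank_eq
        rw [Module.finrank_fin_fun]
        omega
      exact det_recovery hln A U₁ hAt hU₁ hspan σ hspanT _ (fun X hX => pinv_eq _ X hX)
    -- count of good permutations via fibres
    have hEcard : (Finset.univ.filter
          fun σ : Equiv.Perm (Fin n) => dft U₁ (firstImage hln σ) = 0).card =
        ((Finset.powersetCard ℓ (Finset.univ : Finset (Fin n))).filter
          fun T => dft U₁ T = 0).card *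
        (Finset.univ.filter
          fun σ : Equiv.Perm (Fin n) => firstImage hln σ = T₀).card := by
      rw [Finset.card_eq_sum_card_fiberwise (f := firstImage hln)
        (t := (Finset.powersetCard ℓ (Finset.univ : Finset (Fin n))).filter
          fun T => dft U₁ T = 0)
        (fun σ hσ => by
          simp only [Finset.mem_coe, Finset.mem_filter] at hσ ⊢
          exact ⟨firstImage_mem hln σ, hσ.2⟩)]
      have heq : ∀ T ∈ (Finset.powersetCard ℓ (Finset.univ : Finset (Fin n))).filter
          (fun T => dft U₁ T = 0),
          ((Finset.univ.filter
            fun σ : Equiv.Perm (Fin n) => dft U₁ (firstImage hln σ) = 0).filter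
            fun σ => firstImage hln σ = T).card =
          (Finset.univ.filter
            fun σ : Equiv.Perm (Fin n) => firstImage hln σ = T₀).card := by
        intro T hT
        rw [Finset.mem_filter] at hT
        have h5 : (Finset.univ.filter
            fun σ : Equiv.Perm (Fin n) => dft U₁ (firstImage hln σ) = 0).filter
            (fun σ => firstImage hln σ = T) =
            Finset.univ.filter (fun σ : Equiv.Perm (Fin n) => firstImage hln σ = T) := by
          ext σ
          simp only [Finset.mem_filter, Finset.mem_univ, true_and]
          constructor
          · rintro ⟨_, h⟩; exact h
          · intro h
            exact ⟨by rw [h]; exact hT.2, h⟩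
        rw [h5]
        exact hfib T hT.1
      rw [Finset.sum_congr rfl heq, Finset.sum_const, smul_eq_mul]
    -- compare cardinalities
    have hPCcard : (Finset.powersetCard ℓ (Finset.univ : Finset (Fin n))).card = n.choose ℓ := by
      rw [Finset.card_powersetCard, Finset.card_univ, Fintype.card_fin]
    have hsplit := Finset.card_filter_add_card_filter_not
      (s := Finset.powersetCard ℓ (Finset.univ : Finset (Fin n)))
      (p := fun T => dft U₁ T = 0)
    have hgoodT : ((n.choose ℓ : ℕ):ℝ) - δ * (n.choose ℓ) <
        (((Finset.powersetCard ℓ (Finset.univ : Finset (Fin n))).filter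
          fun T => dft U₁ T = 0).card : ℝ) := by
      have hb : (((Finset.powersetCard ℓ (Finset.univ : Finset (Fin n))).filter
          fun T => ¬ dft U₁ T = 0).card : ℝ) < δ * (n.choose ℓ) := hbad
      have hs : (((Finset.powersetCard ℓ (Finset.univ : Finset (Fin n))).filter
          fun T => dft U₁ T = 0).card : ℝ) +
          (((Finset.powersetCard ℓ (Finset.univ : Finset (Fin n))).filter
          fun T => ¬ dft U₁ T = 0).card : ℝ) = ((n.choose ℓ : ℕ) : ℝ) := by
        rw [← hPCcard]
        exact_mod_cast hsplit
      linarith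
    have hFpos : 0 < ((Finset.univ.filter
        fun σ : Equiv.Perm (Fin n) => firstImage hln σ = T₀).card : ℝ) := by
      rcases Nat.eq_zero_or_pos (Finset.univ.filter
        fun σ : Equiv.Perm (Fin n) => firstImage hln σ = T₀).card with h | h
      · exfalso
        have := htot
        rw [h, Nat.mul_zero] at this
        have h2 : 0 < Fintype.card (Equiv.Perm (Fin n)) := Fintype.card_pos
        omega
      · exact_mod_cast h
    rw [lt_div_iff₀ hNpos]
    have hcardeq : (Fintype.card (Equiv.Perm (Fin n)) : ℝ) =
        ((n.choose ℓ : ℕ):ℝ) * ((Finset.univ.filter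
          fun σ : Equiv.Perm (Fin n) => firstImage hln σ = T₀).card : ℝ) := by
      exact_mod_cast htot
    calc (1 - δ) * (Fintype.card (Equiv.Perm (Fin n)) : ℝ)
        = (((n.choose ℓ : ℕ):ℝ) - δ * (n.choose ℓ)) * ((Finset.univ.filter
          fun σ : Equiv.Perm (Fin n) => firstImage hln σ = T₀).card : ℝ) := by
          rw [hcardeq]; ring
    _ < (((Finset.powersetCard ℓ (Finset.univ : Finset (Fin n))).filter
          fun T => dft U₁ T = 0).card : ℝ) * ((Finset.univ.filter
          fun σ : Equiv.Perm (Fin n) => firstImage hln σ = T₀).card : ℝ) :=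
          mul_lt_mul_of_pos_right hgoodT hFpos
    _ = ((Finset.univ.filter
          fun σ : Equiv.Perm (Fin n) => dft U₁ (firstImage hln σ) = 0).card : ℝ) := by
          rw [hEcard]; push_cast; ring
    _ ≤ ((Finset.univ.filter fun σ : Equiv.Perm (Fin n) =>
          A = (A * sampleMatrix hln σ) *
              pinv ((sampleMatrix hln σ)ᵀ * A * sampleMatrix hln σ) *
              (A * sampleMatrix hln σ)ᵀ).card : ℝ) := by
          exact_mod_cast Finset.card_le_card hEsub
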